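/- Let n ≥ 1 and let σ be a noncrossing permutation of Fin n. Then ℓ(σ) + ℓ(σ⁻¹ * s) = n − 1, where s is the n-cycle i ↦ i + 1 (mod n); that is, every noncrossing permutation lies on a geodesic from the identity to s in the Cayley graph of the symmetric group generated by all transpositions. -/

import Mathlib

/-- Minimal number of transpositions whose product is `σ` (0 for the identity);
this is the graph distance from the identity to `σ` in the Cayley graph of the
symmetric group on `Fin n` generated by all transpositions. -/
noncomputable def swapLength (n : ℕ) (σ : Equiv.Perm (Fin n)) : ℕ :=
  sInf {k | ∃ l : List (Equiv.Perm (Fin n)),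
    l.length = k ∧ (∀ t ∈ l, t.IsSwap) ∧ l.prod = σ}

/-- A permutation of `Fin n` is noncrossing if (i) its orbits form a noncrossing
partition and (ii) each cycle of `σ` is written in numerically increasing order:
`σ i` is the least element of the orbit of `i` strictly greater than `i` when such
an element exists, and otherwise the least element of the orbit of `i`. -/
def IsNoncrossingPerm {n : ℕ} (σ : Equiv.Perm (Fin n)) : Prop :=
  (∀ i j k l : Fin n, i < j → j < k → k < l →
      σ.SameCycle i k → σ.SameCycle j l → σ.SameCycle i j) ∧
  (∀ i : Fin n,
    ((∃ j, σ.SameCycle i j ∧ i < j) →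
        IsLeast {j | σ.SameCycle i j ∧ i < j} (σ i)) ∧
    (¬ (∃ j, σ.SameCycle i j ∧ i < j) →
        IsLeast {j | σ.SameCycle i j} (σ i)))

open Equiv Equiv.Perm Finset

namespace NCAux

variable {n : ℕ}


variable {n : ℕ}

/-- Number of orbits of a permutation, counted as the number of orbit minima. -/
def cyc (π : Perm (Fin n)) : ℕ :=
  #(Finset.univ.filter (fun x : Fin n => ∀ y, π.SameCycle x y → x ≤ y))

lemma sameCycle_exists_pow {π : Perm (Fin n)} {x y : Fin n} (h : π.SameCycle x y) :
    ∃ k : ℕ, (π ^ k) x = y := by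
  obtain ⟨i, _, hi⟩ := h.exists_pow_eq'
  exact ⟨i, hi⟩

lemma pow_apply_mem_of_invariant {π : Perm (Fin n)} {S : Finset (Fin n)}
    (hS : ∀ x ∈ S, π x ∈ S) {a : Fin n} (ha : a ∈ S) (k : ℕ) : (π ^ k) a ∈ S := by
  induction k with
  | zero => simpa using ha
  | succ k ih => rw [pow_succ', Perm.mul_apply]; exact hS _ ih

lemma mem_of_invariant {π : Perm (Fin n)} {S : Finset (Fin n)}
    (hS : ∀ x ∈ S, π x ∈ S) {a y : Fin n} (ha : a ∈ S) (h : π.SameCycle a y) : y ∈ S := by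
  obtain ⟨k, hk⟩ := sameCycle_exists_pow h
  exact hk ▸ pow_apply_mem_of_invariant hS ha k

lemma sameCycle_fixed {π : Perm (Fin n)} {x y : Fin n} (hx : π x = x)
    (h : π.SameCycle x y) : y = x := by
  obtain ⟨k, hk⟩ := sameCycle_exists_pow h
  rw [← hk]
  clear hk
  induction k with
  | zero => simp
  | succ k ih => rw [pow_succ', Perm.mul_apply, ih, hx]

lemma sameCycle_of_pow {π : Perm (Fin n)} {x : Fin n} (k : ℕ) :
    π.SameCycle x ((π ^ k) x) := ⟨(k : ℤ), by rw [zpow_natCast]⟩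

lemma classMin_spec (π : Perm (Fin n)) (x : Fin n) :
    ∃ m, π.SameCycle x m ∧ (∀ y, π.SameCycle m y → m ≤ y) := by
  classical
  set C := Finset.univ.filter (fun y => π.SameCycle x y) with hC
  have hne : C.Nonempty := ⟨x, by simp [hC, Equiv.Perm.SameCycle.refl]⟩
  have hxm : π.SameCycle x (C.min' hne) := (Finset.mem_filter.1 (C.min'_mem hne)).2
  refine ⟨C.min' hne, hxm, ?_⟩
  intro y hy
  exact C.min'_le y (Finset.mem_filter.2 ⟨Finset.mem_univ _, hxm.trans hy⟩)

lemma cyc_merge_aux {P Q : Perm (Fin n)} {u v : Fin n} (huv : ¬ P.SameCycle u v)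
    (hQ : ∀ x y, Q.SameCycle x y ↔ P.SameCycle x y ∨
      (P.SameCycle x u ∧ P.SameCycle y v) ∨ (P.SameCycle x v ∧ P.SameCycle y u))
    {mu mv : Fin n} (hmu : P.SameCycle u mu) (hmu2 : ∀ y, P.SameCycle mu y → mu ≤ y)
    (hmv : P.SameCycle v mv) (hmv2 : ∀ y, P.SameCycle mv y → mv ≤ y)
    (hlt : mu < mv) : cyc P = cyc Q + 1 := by
  classical
  have hMP : mv ∈ Finset.univ.filter (fun x : Fin n => ∀ y, P.SameCycle x y → x ≤ y) :=
    Finset.mem_filter.2 ⟨Finset.mem_univ _, hmv2⟩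
  have key : Finset.univ.filter (fun x : Fin n => ∀ y, Q.SameCycle x y → x ≤ y) =
      (Finset.univ.filter (fun x : Fin n => ∀ y, P.SameCycle x y → x ≤ y)).erase mv := by
    ext x
    simp only [Finset.mem_erase, Finset.mem_filter, Finset.mem_univ, true_and]
    constructor
    · intro hx
      constructor
      · intro hxeq
        have hQmv : Q.SameCycle mv mu := (hQ mv mu).2 (Or.inr (Or.inr ⟨hmv.symm, hmu.symm⟩))
        rw [hxeq] at hx
        exact absurd (hx mu hQmv) (not_le.2 hlt)
      · intro y hy; exact hx y ((hQ x y).2 (Or.inl hy))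
    · rintro ⟨hxv, hx⟩ y hy
      rcases (hQ x y).1 hy with h1 | ⟨h2u, h2v⟩ | ⟨h3v, h3u⟩
      · exact hx y h1
      · have hxmu : x = mu :=
          le_antisymm (hx mu (h2u.trans hmu)) (hmu2 x (h2u.trans hmu).symm)
        have hmvy : mv ≤ y := hmv2 y (hmv.symm.trans h2v.symm)
        subst hxmu
        exact le_of_lt (lt_of_lt_of_le hlt hmvy)
      · exact absurd (le_antisymm (hx mv (h3v.trans hmv))
          (hmv2 x (h3v.trans hmv).symm)) hxv
  have hpos : 0 < cyc P := Finset.card_pos.2 ⟨mv, hMP⟩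
  unfold cyc at *
  rw [key, Finset.card_erase_of_mem hMP]
  omega

lemma cyc_merge {P Q : Perm (Fin n)} {u v : Fin n} (huv : ¬ P.SameCycle u v)
    (hQ : ∀ x y, Q.SameCycle x y ↔ P.SameCycle x y ∨
      (P.SameCycle x u ∧ P.SameCycle y v) ∨ (P.SameCycle x v ∧ P.SameCycle y u)) :
    cyc P = cyc Q + 1 := by
  obtain ⟨mu, hmu, hmu2⟩ := classMin_spec P u
  obtain ⟨mv, hmv, hmv2⟩ := classMin_spec P v
  have hne : mu ≠ mv := by
    rintro rfl
    exact huv (hmu.trans hmv.symm)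
  rcases lt_or_gt_of_ne hne with hlt | hgt
  · exact cyc_merge_aux huv hQ hmu hmu2 hmv hmv2 hlt
  · exact cyc_merge_aux (fun h => huv h.symm)
      (fun x y => (hQ x y).trans (by tauto)) hmv hmv2 hmu hmu2 hgt
lemma pow_mul_apply_eq {π : Perm (Fin n)} {a : Fin n} {T : ℕ} (hT : (π ^ T) a = a) :
    ∀ q, (π ^ (T * q)) a = a := by
  intro q
  induction q with
  | zero => simp
  | succ q ih => rw [Nat.mul_succ, pow_add, Perm.mul_apply, hT, ih]

lemma pow_apply_mod {π : Perm (Fin n)} {a : Fin n} {T : ℕ} (hT : (π ^ T) a = a) (m : ℕ) :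
    (π ^ m) a = (π ^ (m % T)) a := by
  conv_lhs => rw [← Nat.mod_add_div m T]
  rw [pow_add, Perm.mul_apply, pow_mul_apply_eq hT]

lemma walk_dichotomy (P : Perm (Fin n)) {a b : Fin n} (hab : a ≠ b) :
    (¬ P.SameCycle a b → (swap a b * P).SameCycle a b) ∧
    (P.SameCycle a b → ¬ (swap a b * P).SameCycle a b) := by
  classical
  set τ := swap a b * P with hτ
  have hex : ∃ t, 0 < t ∧ ((P ^ t) a = a ∨ (P ^ t) a = b) :=
    ⟨orderOf P, orderOf_pos P, Or.inl (by rw [pow_orderOf_eq_one]; rfl)⟩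
  set T := Nat.find hex with hTdef
  obtain ⟨hT0, hTab⟩ := Nat.find_spec hex
  have hmin : ∀ t, 0 < t → t < T → (P ^ t) a ≠ a ∧ (P ^ t) a ≠ b := by
    intro t ht htT
    have h' := Nat.find_min hex htT
    push_neg at h'
    exact h' ht
  have walk : ∀ t, t < T → (τ ^ t) a = (P ^ t) a := by
    intro t
    induction t with
    | zero => simp
    | succ t ih =>
      intro htT
      have ht : t < T := Nat.lt_of_succ_lt htT
      have h1 : (P ^ (t+1)) a = P ((P ^ t) a) := by rw [pow_succ', Perm.mul_apply]
      rw [pow_succ', Perm.mul_apply, ih ht, hτ, Perm.mul_apply, ← h1]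
      exact swap_apply_of_ne_of_ne (hmin (t+1) (Nat.succ_pos t) htT).1
        (hmin (t+1) (Nat.succ_pos t) htT).2
  have hTwalk : (τ ^ T) a = swap a b ((P ^ T) a) := by
    obtain ⟨T', hT'⟩ : ∃ T', T = T' + 1 := ⟨T - 1, by omega⟩
    have h1 : (P ^ (T'+1)) a = P ((P ^ T') a) := by rw [pow_succ', Perm.mul_apply]
    rw [hT', pow_succ', Perm.mul_apply, walk T' (by omega), hτ, Perm.mul_apply, ← h1]
  constructor
  · intro hnot
    have hb : ∀ t, (P ^ t) a ≠ b := fun t ht => hnot (ht ▸ sameCycle_of_pow t)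
    have ha : (P ^ T) a = a := hTab.resolve_right (hb T)
    have hτb : (τ ^ T) a = b := by rw [hTwalk, ha, swap_apply_left]
    exact hτb ▸ sameCycle_of_pow T
  · intro hyes hτc
    have hPT : (P ^ T) a = b := by
      rcases hTab with h | h
      · exfalso
        obtain ⟨k, hk⟩ := sameCycle_exists_pow hyes
        rw [pow_apply_mod h k] at hk
        have hk0 : k % T ≠ 0 := by
          intro h0; rw [h0] at hk; simp at hk; exact hab hk
        exact (hmin (k % T) (Nat.pos_of_ne_zero hk0) (Nat.mod_lt _ hT0)).2 hk
      · exact h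
    have hτT : (τ ^ T) a = a := by rw [hTwalk, hPT, swap_apply_right]
    obtain ⟨k, hk⟩ := sameCycle_exists_pow hτc
    rw [pow_apply_mod hτT k] at hk
    have hkT : k % T < T := Nat.mod_lt _ hT0
    rw [walk _ hkT] at hk
    rcases Nat.eq_zero_or_pos (k % T) with h0 | hpos
    · rw [h0] at hk; simp at hk; exact hab hk
    · exact (hmin _ hpos hkT).2 hk
lemma sameCycle_closed {π : Perm (Fin n)} {p : Fin n → Prop}
    (hinv : ∀ x, p x → p (π x)) {a y : Fin n} (ha : p a) (h : π.SameCycle a y) : p y := by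
  classical
  have hm := mem_of_invariant (π := π) (S := Finset.univ.filter p)
    (fun x hx => Finset.mem_filter.2 ⟨Finset.mem_univ _, hinv x (Finset.mem_filter.1 hx).2⟩)
    (Finset.mem_filter.2 ⟨Finset.mem_univ _, ha⟩) h
  exact (Finset.mem_filter.1 hm).2

lemma union_transfer (P : Perm (Fin n)) (a b : Fin n) {y : Fin n}
    (h : (swap a b * P).SameCycle a y ∨ (swap a b * P).SameCycle b y) :
    P.SameCycle a y ∨ P.SameCycle b y := by
  have hinv : ∀ x : Fin n, (P.SameCycle a x ∨ P.SameCycle b x) →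
      (P.SameCycle a ((swap a b * P) x) ∨ P.SameCycle b ((swap a b * P) x)) := by
    intro x hx
    have hPx : P.SameCycle a (P x) ∨ P.SameCycle b (P x) := by
      rcases hx with h' | h'
      · exact Or.inl h'.apply_right
      · exact Or.inr h'.apply_right
    rw [Perm.mul_apply]
    rcases eq_or_ne (P x) a with h1 | h1
    · rw [h1, swap_apply_left]; exact Or.inr (SameCycle.refl _ _)
    rcases eq_or_ne (P x) b with h2 | h2
    · rw [h2, swap_apply_right]; exact Or.inl (SameCycle.refl _ _)
    · rw [swap_apply_of_ne_of_ne h1 h2]; exact hPx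
  rcases h with h | h
  · exact sameCycle_closed hinv (Or.inl (SameCycle.refl _ _)) h
  · exact sameCycle_closed hinv (Or.inr (SameCycle.refl _ _)) h

lemma swap_swap_cancel (P : Perm (Fin n)) (a b : Fin n) : swap a b * (swap a b * P) = P := by
  rw [← mul_assoc, swap_mul_self, one_mul]

lemma union_transfer' (P : Perm (Fin n)) (a b : Fin n) {y : Fin n}
    (h : P.SameCycle a y ∨ P.SameCycle b y) :
    (swap a b * P).SameCycle a y ∨ (swap a b * P).SameCycle b y :=
  union_transfer (swap a b * P) a b (by rw [swap_swap_cancel]; exact h)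

lemma outside_transfer (P : Perm (Fin n)) {a b x y : Fin n}
    (hxa : ¬ P.SameCycle a x) (hxb : ¬ P.SameCycle b x) (h : P.SameCycle x y) :
    (swap a b * P).SameCycle x y := by
  set τ := swap a b * P with hτ
  have hτa : ¬ τ.SameCycle a x := fun hc => (union_transfer P a b (Or.inl hc)).elim hxa hxb
  have hτb : ¬ τ.SameCycle b x := fun hc => (union_transfer P a b (Or.inr hc)).elim hxa hxb
  have hinv : ∀ z : Fin n, τ.SameCycle x z → τ.SameCycle x (P z) := by
    intro z hz
    have hza : τ z ≠ a := fun hc => hτa ((hc ▸ hz.apply_right).symm)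
    have hzb : τ z ≠ b := fun hc => hτb ((hc ▸ hz.apply_right).symm)
    have hPz : P z = τ z := by
      have h2 : P z = swap a b (τ z) := by
        rw [← Perm.mul_apply, swap_swap_cancel]
      rw [h2, swap_apply_of_ne_of_ne hza hzb]
    rw [hPz]
    exact hz.apply_right
  exact sameCycle_closed hinv (SameCycle.refl _ _) h

lemma outside_transfer' (P : Perm (Fin n)) {a b x y : Fin n}
    (hxa : ¬ P.SameCycle a x) (hxb : ¬ P.SameCycle b x)
    (h : (swap a b * P).SameCycle x y) : P.SameCycle x y := by
  have hτa : ¬ (swap a b * P).SameCycle a x :=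
    fun hc => (union_transfer P a b (Or.inl hc)).elim hxa hxb
  have hτb : ¬ (swap a b * P).SameCycle b x :=
    fun hc => (union_transfer P a b (Or.inr hc)).elim hxa hxb
  have := outside_transfer (swap a b * P) (a := a) (b := b) hτa hτb h
  rwa [swap_swap_cancel] at this

lemma split_char (P : Perm (Fin n)) {a b : Fin n} (hP : P.SameCycle a b) (x y : Fin n) :
    P.SameCycle x y ↔ (swap a b * P).SameCycle x y ∨
      ((swap a b * P).SameCycle x a ∧ (swap a b * P).SameCycle y b) ∨
      ((swap a b * P).SameCycle x b ∧ (swap a b * P).SameCycle y a) := by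
  classical
  have norm : ∀ z : Fin n, P.SameCycle a z ∨ P.SameCycle b z → P.SameCycle a z :=
    fun z hz => hz.elim id (fun h' => hP.trans h')
  constructor
  · intro hxy
    by_cases hc : P.SameCycle a x ∨ P.SameCycle b x
    · have hx' := union_transfer' P a b hc
      have hcy : P.SameCycle a y ∨ P.SameCycle b y := by
        rcases hc with h | h
        exacts [Or.inl (h.trans hxy), Or.inr (h.trans hxy)]
      have hy' := union_transfer' P a b hcy
      rcases hx' with hx' | hx' <;> rcases hy' with hy' | hy'
      · exact Or.inl (hx'.symm.trans hy')
      · exact Or.inr (Or.inl ⟨hx'.symm, hy'.symm⟩)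
      · exact Or.inr (Or.inr ⟨hx'.symm, hy'.symm⟩)
      · exact Or.inl (hx'.symm.trans hy')
    · push_neg at hc
      exact Or.inl (outside_transfer P hc.1 hc.2 hxy)
  · rintro (h | ⟨h1, h2⟩ | ⟨h1, h2⟩)
    · by_cases hc : P.SameCycle a x ∨ P.SameCycle b x
      · have hx' := union_transfer' P a b hc
        have hy' : (swap a b * P).SameCycle a y ∨ (swap a b * P).SameCycle b y := by
          rcases hx' with h' | h'
          exacts [Or.inl (h'.trans h), Or.inr (h'.trans h)]
        have hpy := norm y (union_transfer P a b hy')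
        have hpx := norm x hc
        exact hpx.symm.trans hpy
      · push_neg at hc
        exact outside_transfer' P hc.1 hc.2 h
    · have hpx := norm x (union_transfer P a b (Or.inl h1.symm))
      have hpy := norm y (union_transfer P a b (Or.inr h2.symm))
      exact hpx.symm.trans hpy
    · have hpx := norm x (union_transfer P a b (Or.inr h1.symm))
      have hpy := norm y (union_transfer P a b (Or.inl h2.symm))
      exact hpx.symm.trans hpy

lemma cyc_split (P : Perm (Fin n)) {a b : Fin n} (hab : a ≠ b) (hP : P.SameCycle a b) :
    cyc (swap a b * P) = cyc P + 1 :=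
  cyc_merge ((walk_dichotomy P hab).2 hP) (split_char P hP)

lemma cyc_merge_perm (P : Perm (Fin n)) {a b : Fin n} (hab : a ≠ b) (hP : ¬ P.SameCycle a b) :
    cyc P = cyc (swap a b * P) + 1 := by
  have h1 : (swap a b * P).SameCycle a b := (walk_dichotomy P hab).1 hP
  have h2 := cyc_split (swap a b * P) hab h1
  rwa [swap_swap_cancel] at h2
lemma cyc_one : cyc (1 : Perm (Fin n)) = n := by
  unfold cyc
  have h : (Finset.univ.filter
      (fun x : Fin n => ∀ y, (1 : Perm (Fin n)).SameCycle x y → x ≤ y)) = Finset.univ := by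
    ext x
    simp only [Finset.mem_filter, Finset.mem_univ, true_and, iff_true]
    intro y hy
    rw [Equiv.Perm.sameCycle_one] at hy
    exact le_of_eq hy
  rw [h, Finset.card_univ, Fintype.card_fin]

lemma cyc_le (π : Perm (Fin n)) : cyc π ≤ n := by
  unfold cyc
  exact le_trans (Finset.card_filter_le _ _) (by rw [Finset.card_univ, Fintype.card_fin])

lemma exists_swap_list : ∀ (k : ℕ) (π : Perm (Fin n)), #π.support ≤ k →
    ∃ l : List (Perm (Fin n)), (∀ t ∈ l, t.IsSwap) ∧ l.prod = π ∧ l.length + cyc π = n := by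
  intro k
  induction k with
  | zero =>
    intro π hπ
    have h1 : π = 1 := by
      rw [← Equiv.Perm.support_eq_empty_iff]
      exact Finset.card_eq_zero.1 (Nat.le_zero.1 hπ)
    subst h1
    exact ⟨[], by simp, by simp, by simp [cyc_one]⟩
  | succ k ih =>
    intro π hπ
    by_cases h1 : π = 1
    · subst h1; exact ⟨[], by simp, by simp, by simp [cyc_one]⟩
    · obtain ⟨x, hx⟩ : ∃ x, π x ≠ x := by
        by_contra hc; push_neg at hc; exact h1 (Equiv.ext hc)
      have hsplit : cyc (swap x (π x) * π) = cyc π + 1 :=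
        cyc_split π (Ne.symm hx) (SameCycle.refl π x).apply_right
      have hcard : #(swap x (π x) * π).support < #π.support := card_support_swap_mul hx
      obtain ⟨l, hl1, hl2, hl3⟩ := ih (swap x (π x) * π) (by omega)
      refine ⟨swap x (π x) :: l, ?_, ?_, ?_⟩
      · intro t ht
        rcases List.mem_cons.1 ht with rfl | ht
        · exact ⟨x, π x, Ne.symm hx, rfl⟩
        · exact hl1 t ht
      · rw [List.prod_cons, hl2, swap_swap_cancel]
      · simp only [List.length_cons]; omega
  
lemma lower_bound : ∀ l : List (Perm (Fin n)), (∀ t ∈ l, t.IsSwap) →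
    n ≤ l.length + cyc l.prod := by
  intro l
  induction l with
  | nil => intro _; simp [cyc_one]
  | cons t l ih =>
    intro hl
    obtain ⟨a, b, hab, rfl⟩ := hl t List.mem_cons_self
    have hrest := ih (fun t' ht' => hl t' (List.mem_cons_of_mem _ ht'))
    rw [List.prod_cons, List.length_cons]
    by_cases hc : (l.prod).SameCycle a b
    · have hs := cyc_split l.prod hab hc
      omega
    · have hs := cyc_merge_perm l.prod hab hc
      omega

lemma swapLength_add_cyc (π : Perm (Fin n)) : swapLength n π + cyc π = n := by
  obtain ⟨l, hl1, hl2, hl3⟩ := exists_swap_list (#π.support) π le_rfl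
  have hne : {k | ∃ l : List (Perm (Fin n)),
      l.length = k ∧ (∀ t ∈ l, t.IsSwap) ∧ l.prod = π}.Nonempty :=
    ⟨l.length, l, rfl, hl1, hl2⟩
  obtain ⟨l0, hlen0, hsw0, hprod0⟩ := Nat.sInf_mem hne
  have hlow := lower_bound l0 hsw0
  rw [hprod0, hlen0] at hlow
  have hup : sInf {k | ∃ l : List (Perm (Fin n)),
      l.length = k ∧ (∀ t ∈ l, t.IsSwap) ∧ l.prod = π} ≤ l.length :=
    Nat.sInf_le ⟨l, rfl, hl1, hl2⟩
  unfold swapLength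
  omega
lemma finRotate_pow_zero (m : ℕ) (k : ℕ) :
    ((finRotate (m+1)) ^ k) (0 : Fin (m+1)) = ⟨k % (m+1), Nat.mod_lt _ (Nat.succ_pos m)⟩ := by
  induction k with
  | zero => apply Fin.ext; simp
  | succ k ih =>
    rw [pow_succ', Perm.mul_apply, ih, finRotate_succ_apply]
    apply Fin.ext
    rw [Fin.add_def]
    show (k % (m+1) + ((1 : Fin (m+1)) : ℕ)) % (m+1) = (k+1) % (m+1)
    rw [Fin.val_one']
    exact (Nat.add_mod k 1 (m+1)).symm

lemma finRotate_sameCycle (m : ℕ) (x y : Fin (m+1)) : (finRotate (m+1)).SameCycle x y := by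
  have h0 : ∀ z : Fin (m+1), (finRotate (m+1)).SameCycle 0 z := by
    intro z
    have h : ((finRotate (m+1)) ^ z.val) (0 : Fin (m+1)) = z := by
      rw [finRotate_pow_zero]
      exact Fin.ext (Nat.mod_eq_of_lt z.isLt)
    have h2 := sameCycle_of_pow (π := finRotate (m+1)) (x := (0 : Fin (m+1))) z.val
    rw [h] at h2
    exact h2
  exact (h0 x).symm.trans (h0 y)

lemma cyc_finRotate (m : ℕ) : cyc (finRotate (m+1)) = 1 := by
  unfold cyc
  have h : (Finset.univ.filter
      (fun x : Fin (m+1) => ∀ y, (finRotate (m+1)).SameCycle x y → x ≤ y)) = {0} := by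
    ext x
    simp only [Finset.mem_filter, Finset.mem_univ, true_and, Finset.mem_singleton]
    constructor
    · intro hx
      exact le_antisymm (hx 0 (finRotate_sameCycle m x 0)) (Fin.zero_le x)
    · rintro rfl
      intro y _
      exact Fin.zero_le y
  rw [h, Finset.card_singleton]
lemma main_induction (m : ℕ) : ∀ (k : ℕ) (σ : Perm (Fin (m+1))), #σ.support ≤ k →
    IsNoncrossingPerm σ → cyc σ + cyc (σ⁻¹ * finRotate (m+1)) = m + 2 := by
  intro k
  induction k with
  | zero =>
    intro σ hs _
    have h1 : σ = 1 := by
      rw [← Equiv.Perm.support_eq_empty_iff]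
      exact Finset.card_eq_zero.1 (Nat.le_zero.1 hs)
    subst h1
    rw [inv_one, one_mul, cyc_one, cyc_finRotate]
  | succ k ih =>
    intro σ hs hnc
    by_cases h1 : σ = 1
    · subst h1; rw [inv_one, one_mul, cyc_one, cyc_finRotate]
    obtain ⟨x0, hx0⟩ : ∃ x, σ x ≠ x := by
      by_contra hc; push_neg at hc; exact h1 (Equiv.ext hc)
    set Pairs := Finset.univ.filter (fun p : Fin (m+1) × Fin (m+1) =>
      p.1 < p.2 ∧ σ.SameCycle p.1 p.2) with hPairsdef
    have hPairs : Pairs.Nonempty := by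
      rcases lt_or_gt_of_ne (Ne.symm hx0) with hlt | hgt
      · refine ⟨(x0, σ x0), ?_⟩
        rw [hPairsdef, Finset.mem_filter]
        exact ⟨Finset.mem_univ _, hlt, (SameCycle.refl σ x0).apply_right⟩
      · refine ⟨(σ x0, x0), ?_⟩
        rw [hPairsdef, Finset.mem_filter]
        exact ⟨Finset.mem_univ _, hgt, ((SameCycle.refl σ x0).apply_right).symm⟩
    obtain ⟨p0, hp0mem, hp0min⟩ :=
      Finset.exists_min_image Pairs (fun p => p.2.val - p.1.val) hPairs
    obtain ⟨i, j⟩ := p0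
    rw [hPairsdef, Finset.mem_filter] at hp0mem
    obtain ⟨-, hij, hsij⟩ := hp0mem
    dsimp only at hij hsij hp0min
    have hjleast : ∀ y : Fin (m+1), σ.SameCycle i y → i < y → j ≤ y := by
      intro y hy hiy
      have hmem : (i, y) ∈ Pairs := by
        rw [hPairsdef, Finset.mem_filter]
        exact ⟨Finset.mem_univ _, hiy, hy⟩
      have hm := hp0min (i, y) hmem
      dsimp only at hm
      rw [Fin.le_def]
      rw [Fin.lt_def] at hij hiy
      omega
    have hex_i : ∃ y, σ.SameCycle i y ∧ i < y := ⟨j, hsij, hij⟩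
    have hleast_i := (hnc.2 i).1 hex_i
    have hσi : σ i = j :=
      le_antisymm (hleast_i.2 ⟨hsij, hij⟩) (hjleast (σ i) hleast_i.1.1 hleast_i.1.2)
    have hij_ne : i ≠ j := ne_of_lt hij
    have hji_ne : j ≠ i := Ne.symm hij_ne
    have hfix : ∀ z : Fin (m+1), i < z → z < j → σ z = z := by
      intro z hiz hzj
      by_contra hz
      have hzni : ¬ σ.SameCycle i z := fun hc => absurd (hjleast z hc hiz) (not_le.2 hzj)
      have hszq : σ.SameCycle z (σ z) := (SameCycle.refl σ z).apply_right
      have hqi : σ z ≠ i := fun hc => hzni ((hc ▸ hszq).symm)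
      have hqj : σ z ≠ j := fun hc => hzni (hsij.trans (hc ▸ hszq).symm)
      rcases lt_trichotomy (σ z) i with hqlti | hqeqi | hqgti
      · exact hzni ((hnc.1 (σ z) i z j hqlti hiz hzj hszq.symm hsij).symm.trans hszq.symm)
      · exact hqi hqeqi
      · rcases lt_trichotomy (σ z) j with hqltj | hqeqj | hqgtj
        · rcases lt_or_gt_of_ne (show σ z ≠ z from hz) with h' | h'
          · have hmem : (σ z, z) ∈ Pairs := by
              rw [hPairsdef, Finset.mem_filter]
              exact ⟨Finset.mem_univ _, h', hszq.symm⟩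
            have hm := hp0min (σ z, z) hmem
            dsimp only at hm
            have hv1 : ((σ z) : ℕ) < (z : ℕ) := h'
            have hv2 : (i : ℕ) < ((σ z) : ℕ) := hqgti
            have hv3 : (i : ℕ) < (j : ℕ) := hij
            have hv4 : (z : ℕ) < (j : ℕ) := hzj
            omega
          · have hmem : (z, σ z) ∈ Pairs := by
              rw [hPairsdef, Finset.mem_filter]
              exact ⟨Finset.mem_univ _, h', hszq⟩
            have hm := hp0min (z, σ z) hmem
            dsimp only at hm
            have hv1 : (z : ℕ) < ((σ z) : ℕ) := h'
            have hv2 : ((σ z) : ℕ) < (j : ℕ) := hqltj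
            have hv3 : (i : ℕ) < (j : ℕ) := hij
            have hv4 : (i : ℕ) < (z : ℕ) := hiz
            omega
        · exact hqj hqeqj
        · exact hzni (hnc.1 i z j (σ z) hiz hzj hqgtj hsij hszq)
    set σ' := swap i j * σ with hσ'
    have hsplitc : cyc σ' = cyc σ + 1 := by rw [hσ']; exact cyc_split σ hij_ne hsij
    have hchar : ∀ x y, σ.SameCycle x y ↔ σ'.SameCycle x y ∨
        (σ'.SameCycle x i ∧ σ'.SameCycle y j) ∨
        (σ'.SameCycle x j ∧ σ'.SameCycle y i) := by
      rw [hσ']; exact split_char σ hsij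
    have hfixi : σ' i = i := by rw [hσ', Perm.mul_apply, hσi, swap_apply_right]
    have c3 : ∀ y, σ'.SameCycle i y → y = i := fun y hy => sameCycle_fixed hfixi hy
    have c2 : ∀ x y, σ'.SameCycle x y → σ.SameCycle x y :=
      fun x y hy => (hchar x y).2 (Or.inl hy)
    have c1 : ∀ x y, x ≠ i → y ≠ i → (σ.SameCycle x y ↔ σ'.SameCycle x y) := by
      intro x y hx hy
      constructor
      · intro h
        rcases (hchar x y).1 h with h' | ⟨h1', h2'⟩ | ⟨h1', h2'⟩
        · exact h'
        · exact absurd (c3 x h1'.symm) hx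
        · exact absurd (c3 y h2'.symm) hy
      · exact c2 x y
    have hnc' : IsNoncrossingPerm σ' := by
      constructor
      · intro a b c d hab hbc hcd hac hbd
        have hac_ne : a ≠ c := ne_of_lt (lt_trans hab hbc)
        have hbd_ne : b ≠ d := ne_of_lt (lt_trans hbc hcd)
        have hai : a ≠ i := by rintro rfl; exact hac_ne (c3 c hac).symm
        have hbi : b ≠ i := by rintro rfl; exact hbd_ne (c3 d hbd).symm
        exact (c1 a b hai hbi).1 (hnc.1 a b c d hab hbc hcd (c2 _ _ hac) (c2 _ _ hbd))
      · intro x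
        by_cases hxi : x = i
        · subst hxi
          constructor
          · rintro ⟨y, hy, hxy⟩
            exact absurd (c3 y hy) (ne_of_gt hxy)
          · intro _
            refine ⟨(SameCycle.refl σ' x).apply_right, ?_⟩
            intro z hz
            rw [hfixi, c3 z hz]
        · by_cases hsx : σ x = i
          · have hval : σ' x = j := by rw [hσ', Perm.mul_apply, hsx, swap_apply_left]
            have hxB : σ.SameCycle x i := by
              rw [← hsx]; exact (SameCycle.refl σ x).apply_right
            have hxj : σ.SameCycle x j := hxB.trans hsij
            have hx'j : σ'.SameCycle x j := (c1 x j hxi hji_ne).1 hxj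
            by_cases hexσ : ∃ y, σ.SameCycle x y ∧ x < y
            · have hL := (hnc.2 x).1 hexσ
              have hxlti : x < i := by have h' := hL.1.2; rwa [hsx] at h'
              have hxltj : x < j := lt_trans hxlti hij
              constructor
              · intro _
                constructor
                · rw [hval]; exact ⟨hx'j, hxltj⟩
                · intro z hz
                  rw [hval]
                  obtain ⟨hz1, hz2⟩ := hz
                  have hzi : z ≠ i := by rintro rfl; exact hxi (c3 x hz1.symm)
                  have hzσ : σ.SameCycle x z := c2 _ _ hz1
                  have hige : i ≤ z := by have h' := hL.2 ⟨hzσ, hz2⟩; rwa [hsx] at h'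
                  exact hjleast z (hxB.symm.trans hzσ) (lt_of_le_of_ne hige (Ne.symm hzi))
              · intro hnex
                exact absurd ⟨j, hx'j, hxltj⟩ hnex
            · have hL := (hnc.2 x).2 hexσ
              constructor
              · rintro ⟨y, hy, hxy⟩
                exact absurd ⟨y, c2 _ _ hy, hxy⟩ hexσ
              · intro _
                constructor
                · rw [hval]; exact hx'j
                · intro z hz
                  rw [hval]
                  have hzi : z ≠ i := by rintro rfl; exact hxi (c3 x hz.symm)
                  have hzσ : σ.SameCycle x z := c2 _ _ hz
                  have hige : i ≤ z := by have h' := hL.2 hzσ; rwa [hsx] at h'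
                  exact hjleast z (hxB.symm.trans hzσ) (lt_of_le_of_ne hige (Ne.symm hzi))
          · have hsxj : σ x ≠ j := fun hc => hxi (σ.injective (hc.trans hσi.symm))
            have hval : σ' x = σ x := by
              rw [hσ', Perm.mul_apply, swap_apply_of_ne_of_ne hsx hsxj]
            constructor
            · rintro ⟨y, hy, hxy⟩
              have hL := (hnc.2 x).1 ⟨y, c2 _ _ hy, hxy⟩
              refine ⟨⟨(SameCycle.refl σ' x).apply_right, ?_⟩, ?_⟩
              · rw [hval]; exact hL.1.2
              · intro z hz
                rw [hval]
                exact hL.2 ⟨c2 _ _ hz.1, hz.2⟩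
            · intro hnex
              by_cases hexσ : ∃ y, σ.SameCycle x y ∧ x < y
              · exfalso
                have hL := (hnc.2 x).1 hexσ
                exact hnex ⟨σ x, (c1 x (σ x) hxi hsx).1 hL.1.1, hL.1.2⟩
              · have hL := (hnc.2 x).2 hexσ
                refine ⟨(SameCycle.refl σ' x).apply_right, ?_⟩
                intro z hz
                rw [hval]
                exact hL.2 (c2 _ _ hz)
    have hsup : #σ'.support < #σ.support := by
      have h' := card_support_swap_mul (f := σ) (x := i) (by rw [hσi]; exact hji_ne)
      rwa [hσi, ← hσ'] at h'
    have hIH := ih σ' (by omega) hnc'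
    set s := finRotate (m+1) with hsdef
    set τ := σ⁻¹ * s with hτdef
    set p := σ⁻¹ i with hpdef
    have hpj : σ p = i := by rw [hpdef]; exact Equiv.apply_symm_apply σ i
    have hpi_ne : p ≠ i := by
      intro hc
      rw [hc] at hpj
      exact hji_ne (hσi.symm.trans hpj)
    have h3 : σ⁻¹ j = i := by rw [← hσi, ← Perm.mul_apply, inv_mul_cancel, Perm.one_apply]
    have hfact : σ'⁻¹ * s = swap p i * τ := by
      have h2 : swap (σ⁻¹ i) i = σ⁻¹ * swap i j * σ := by
        have h4 := swap_apply_apply σ⁻¹ i j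
        rw [inv_inv] at h4
        rw [h3] at h4
        exact h4
      rw [hτdef, hpdef, hσ', mul_inv_rev, swap_inv, h2]
      group
    have hSinv : ∀ z : Fin (m+1), (i ≤ z ∧ z < j) → (i ≤ τ z ∧ τ z < j) := by
      intro z hz
      obtain ⟨h1', h2'⟩ := hz
      have hzval : z.val + 1 < m + 1 := by
        have hjlt := j.isLt
        rw [Fin.lt_def] at h2'
        omega
      have hzlast : z < Fin.last m := by
        rw [Fin.lt_def]
        simp only [Fin.val_last]
        omega
      have hsz : s z = ⟨z.val + 1, hzval⟩ := by
        rw [hsdef, finRotate_succ_apply]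
        apply Fin.ext
        exact Fin.val_add_one_of_lt hzlast
      rcases eq_or_lt_of_le (show z.val + 1 ≤ j.val by rw [Fin.lt_def] at h2'; omega)
        with heq | hlt
      · have hszj : s z = j := by rw [hsz]; exact Fin.ext heq
        rw [hτdef, Perm.mul_apply, hszj, h3]
        exact ⟨le_refl i, hij⟩
      · have hfix2 : σ (⟨z.val+1, hzval⟩ : Fin (m+1)) = ⟨z.val+1, hzval⟩ := by
          apply hfix
          · rw [Fin.lt_def]
            simp only
            rw [Fin.le_def] at h1'
            omega
          · rw [Fin.lt_def]
            exact hlt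
        have hinvfix : σ⁻¹ (⟨z.val+1, hzval⟩ : Fin (m+1)) = ⟨z.val+1, hzval⟩ := by
          conv_lhs => rw [← hfix2]
          rw [← Perm.mul_apply, inv_mul_cancel, Perm.one_apply]
        rw [hτdef, Perm.mul_apply, hsz, hinvfix]
        constructor
        · rw [Fin.le_def]
          rw [Fin.le_def] at h1'
          simp only
          omega
        · rw [Fin.lt_def]
          exact hlt
    have hτpi : ¬ τ.SameCycle p i := by
      intro hc
      have hp := sameCycle_closed (π := τ) (p := fun z => i ≤ z ∧ z < j) hSinv
        ⟨le_refl i, hij⟩ hc.symm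
      have hpw : σ.SameCycle i p := by
        have h' : σ.SameCycle p (σ p) := (SameCycle.refl σ p).apply_right
        rw [hpj] at h'
        exact h'.symm
      exact absurd hp.2 (not_lt.2 (hjleast p hpw (lt_of_le_of_ne hp.1 (Ne.symm hpi_ne))))
    have hmergec : cyc τ = cyc (σ'⁻¹ * s) + 1 := by
      rw [hfact]
      exact cyc_merge_perm τ hpi_ne hτpi
    omega
end NCAux

/-- Every noncrossing permutation lies on a geodesic from the identity to the
`n`-cycle `s = finRotate n` in the Cayley graph generated by all
transpositions. -/
theorem noncrossing_mem_interval (n : ℕ) (hn : 1 ≤ n) (σ : Equiv.Perm (Fin n))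
    (h : IsNoncrossingPerm σ) :
    swapLength n σ + swapLength n (σ⁻¹ * finRotate n) = n - 1 := by
  obtain ⟨m, rfl⟩ : ∃ m, n = m + 1 := ⟨n - 1, by omega⟩
  have h1 := NCAux.swapLength_add_cyc σ
  have h2 := NCAux.swapLength_add_cyc (σ⁻¹ * finRotate (m + 1))
  have h3 := NCAux.main_induction m (#σ.support) σ le_rfl h
  omega
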